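/- arXiv:1307.2824 — 2 statements merged into one kernel-verified Lean document; each statement's English description precedes it below -/
import Mathlib

section
/- Define θ_{n,γ}(p) = E[(N(p)/n)^{γ-1}] where N(p) - 1 ~ Bin(n-1,p), and β_{n,γ}(p) = p·θ_{n,γ}(p). For any n ≥ 2, 0 < p < 1, and γ > 1, we have β_{n,γ}(p) > p^γ. -/
open Finset

/-- θ_{n,γ}(p) = E[(n/N(p))^{1-γ}] where N(p) - 1 ~ Bin(n-1, p). -/
noncomputable def theta (n : ℕ) (γ p : ℝ) : ℝ :=
  ∑ k ∈ Finset.range n,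
    ((n - 1).choose k : ℝ) * p ^ k * (1 - p) ^ (n - 1 - k) * ((n : ℝ) / (k + 1)) ^ (1 - γ)

/-- β_{n,γ}(p) = p · θ_{n,γ}(p). -/
noncomputable def beta (n : ℕ) (γ p : ℝ) : ℝ := p * theta n γ p

lemma choose_id (n k : ℕ) (hn : 1 ≤ n) :
    ((n.choose (k + 1) : ℝ)) * (k + 1) = (n : ℝ) * ((n - 1).choose k) := by
  have h := Nat.add_one_mul_choose_eq (n - 1) k
  have hn' : n - 1 + 1 = n := Nat.succ_pred_eq_of_pos hn
  rw [hn'] at h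
  exact_mod_cast h.symm

lemma binom_sum (n : ℕ) (p : ℝ) :
    ∑ j ∈ Finset.range (n + 1), (n.choose j : ℝ) * p ^ j * (1 - p) ^ (n - j) = 1 := by
  have h := add_pow p (1 - p) n
  have : p + (1 - p) = 1 := by ring
  rw [this, one_pow] at h
  calc ∑ j ∈ Finset.range (n + 1), (n.choose j : ℝ) * p ^ j * (1 - p) ^ (n - j)
      = ∑ j ∈ Finset.range (n + 1), p ^ j * (1 - p) ^ (n - j) * (n.choose j : ℝ) :=
        Finset.sum_congr rfl fun j _ => by ring
    _ = 1 := h.symm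

lemma binom_mean (n : ℕ) (hn : 1 ≤ n) (p : ℝ) :
    ∑ j ∈ Finset.range (n + 1), (j : ℝ) * ((n.choose j : ℝ) * p ^ j * (1 - p) ^ (n - j))
      = n * p := by
  rw [Finset.sum_range_succ']
  have h0 : ((0 : ℕ) : ℝ) * ((n.choose 0 : ℝ) * p ^ 0 * (1 - p) ^ (n - 0)) = 0 := by simp
  rw [h0, add_zero]
  have key : ∀ k ∈ Finset.range n,
      ((k + 1 : ℕ) : ℝ) * ((n.choose (k + 1) : ℝ) * p ^ (k + 1) * (1 - p) ^ (n - (k + 1)))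
        = (n : ℝ) * p * (((n - 1).choose k : ℝ) * p ^ k * (1 - p) ^ (n - 1 - k)) := by
    intro k hk
    have hc := choose_id n k hn
    have hsub : n - (k + 1) = n - 1 - k := by omega
    rw [hsub]
    push_cast
    linear_combination (p ^ (k + 1) * (1 - p) ^ (n - 1 - k)) * hc
  rw [Finset.sum_congr rfl key, ← Finset.mul_sum]
  have hb := binom_sum (n - 1) p
  have hn' : n - 1 + 1 = n := Nat.succ_pred_eq_of_pos hn
  rw [hn'] at hb
  rw [hb, mul_one]

lemma beta_eq (n : ℕ) (hn : 1 ≤ n) (p γ : ℝ) (hγ : 0 < γ) :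
    beta n γ p = ∑ j ∈ Finset.range (n + 1),
      (n.choose j : ℝ) * p ^ j * (1 - p) ^ (n - j) * ((j : ℝ) / n) ^ γ := by
  have hnpos : (0 : ℝ) < n := by exact_mod_cast hn
  rw [Finset.sum_range_succ']
  have h0 : (n.choose 0 : ℝ) * p ^ 0 * (1 - p) ^ (n - 0) * (((0 : ℕ) : ℝ) / n) ^ γ = 0 := by
    rw [Nat.cast_zero, zero_div, Real.zero_rpow (ne_of_gt hγ)]
    ring
  rw [h0, add_zero]
  rw [beta, theta, Finset.mul_sum]
  refine Finset.sum_congr rfl fun k hk => ?_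
  have hk1 : (0 : ℝ) < (k : ℝ) + 1 := by positivity
  have hx : (0 : ℝ) < (n : ℝ) / (k + 1) := by positivity
  have hsub : n - (k + 1) = n - 1 - k := by omega
  rw [hsub]
  have hrw : ((n : ℝ) / (k + 1)) ^ (1 - γ)
      = (((k : ℝ) + 1) / n) ^ γ * ((n : ℝ) / (k + 1)) := by
    have hinv : (((k : ℝ) + 1) / n) = ((n : ℝ) / (k + 1))⁻¹ := by
      field_simp
    rw [hinv, Real.inv_rpow hx.le, Real.rpow_sub hx, Real.rpow_one, div_eq_mul_inv, mul_comm]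
  have hk1' : ((k : ℝ) + 1) ≠ 0 := ne_of_gt hk1
  have hB : (n.choose (k + 1) : ℝ) = (n : ℝ) * ((n - 1).choose k) / ((k : ℝ) + 1) := by
    rw [eq_div_iff hk1']
    exact choose_id n k hn
  rw [hrw]
  push_cast
  rw [hB]
  field_simp
  ring

lemma tangent_le (p γ x : ℝ) (hp0 : 0 < p) (hγ : 1 < γ) (hx : 0 ≤ x) :
    p ^ γ + γ * p ^ (γ - 1) * (x - p) ≤ x ^ γ := by
  have hs : (-1 : ℝ) ≤ x / p - 1 := by
    have : 0 ≤ x / p := div_nonneg hx hp0.le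
    linarith
  have hb := one_add_mul_self_le_rpow_one_add hs hγ.le
  have hx' : (1 : ℝ) + (x / p - 1) = x / p := by ring
  rw [hx'] at hb
  have hdiv : (x / p) ^ γ = x ^ γ / p ^ γ := Real.div_rpow hx hp0.le γ
  rw [hdiv] at hb
  have hpγ : (0 : ℝ) < p ^ γ := Real.rpow_pos_of_pos hp0 γ
  have hb2 : p ^ γ * (1 + γ * (x / p - 1)) ≤ x ^ γ := by
    calc p ^ γ * (1 + γ * (x / p - 1)) ≤ p ^ γ * (x ^ γ / p ^ γ) :=
          mul_le_mul_of_nonneg_left hb hpγ.le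
    _ = x ^ γ := by field_simp
  have hkey : p ^ γ * (1 + γ * (x / p - 1)) = p ^ γ + γ * p ^ (γ - 1) * (x - p) := by
    have h1 : p ^ (γ - 1) = p ^ γ / p := Real.rpow_sub_one hp0.ne' γ
    rw [h1]
    field_simp
  linarith [hb2, hkey]

theorem beta_gt_rpow (n : ℕ) (hn : 2 ≤ n) (p γ : ℝ) (hp0 : 0 < p) (hp1 : p < 1)
    (hγ : 1 < γ) : beta n γ p > p ^ γ := by
  have hn1 : 1 ≤ n := by omega
  have hγ0 : (0 : ℝ) < γ := by linarith
  have hq0 : (0 : ℝ) < 1 - p := by linarith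
  rw [beta_eq n hn1 p γ hγ0]
  set w : ℕ → ℝ := fun j => (n.choose j : ℝ) * p ^ j * (1 - p) ^ (n - j) with hw
  have hwnn : ∀ j ∈ Finset.range (n + 1), 0 ≤ w j := by
    intro j _
    have : (0 : ℝ) ≤ (n.choose j : ℝ) := Nat.cast_nonneg _
    positivity
  -- the affine lower bound sums to p ^ γ
  have hsum : ∑ j ∈ Finset.range (n + 1),
      w j * (p ^ γ + γ * p ^ (γ - 1) * ((j : ℝ) / n - p)) = p ^ γ := by
    have hnpos : (0 : ℝ) < n := by exact_mod_cast hn1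
    have e1 := binom_sum n p
    have e2 := binom_mean n hn1 p
    have expand : ∀ j ∈ Finset.range (n + 1),
        w j * (p ^ γ + γ * p ^ (γ - 1) * ((j : ℝ) / n - p))
          = (p ^ γ - γ * p ^ (γ - 1) * p) * w j
            + (γ * p ^ (γ - 1) / n) * ((j : ℝ) * w j) := by
      intro j _
      field_simp
      ring
    rw [Finset.sum_congr rfl expand, Finset.sum_add_distrib, ← Finset.mul_sum, ← Finset.mul_sum]
    have e1' : ∑ j ∈ Finset.range (n + 1), w j = 1 := e1
    have e2' : ∑ j ∈ Finset.range (n + 1), (j : ℝ) * w j = n * p := e2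
    rw [e1', e2', mul_one]
    field_simp
    ring
  rw [← hsum]
  apply Finset.sum_lt_sum
  · intro j hj
    have hx : (0 : ℝ) ≤ (j : ℝ) / n := by positivity
    exact mul_le_mul_of_nonneg_left (tangent_le p γ _ hp0 hγ hx) (hwnn j hj)
  · refine ⟨0, Finset.mem_range.mpr (by omega), ?_⟩
    have hw0 : w 0 = (1 - p) ^ n := by simp [hw]
    have hw0pos : 0 < w 0 := by rw [hw0]; positivity
    have hval : ((0 : ℕ) : ℝ) / n = 0 := by simp
    rw [hval, Real.zero_rpow (ne_of_gt hγ0), mul_zero]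
    have : p ^ γ + γ * p ^ (γ - 1) * (0 - p) = p ^ γ * (1 - γ) := by
      have h1 : p ^ (γ - 1) = p ^ γ / p := Real.rpow_sub_one hp0.ne' γ
      rw [h1]; field_simp; ring
    rw [this]
    have hpγ : (0 : ℝ) < p ^ γ := Real.rpow_pos_of_pos hp0 γ
    nlinarith [mul_pos hw0pos hpγ]
end

section
/- For CRRA utility with 0 < γ < 1, U^{OT}_{n,γ} = (1/(1-γ))(∫₀^∞ e^{-rt}β_{n,γ}(s(t))^{1/γ}dt)^γ < (1/(1-γ))(∫₀^∞ e^{-rt}s(t)dt)^γ = U^A_γ, i.e., the fair annuity strictly dominates the optimal tontine in lifetime utility. -/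
open Finset MeasureTheory Set

lemma weight_sum (n : ℕ) (hn : 1 ≤ n) (p : ℝ) :
    ∑ k ∈ Finset.range n, ((n - 1).choose k : ℝ) * p ^ k * (1 - p) ^ (n - 1 - k) = 1 := by
  obtain ⟨m, rfl⟩ : ∃ m, n = m + 1 := ⟨n - 1, (Nat.succ_pred_eq_of_pos hn).symm⟩
  have h := add_pow p (1 - p) m
  simp only [add_sub_cancel, one_pow] at h
  calc ∑ k ∈ Finset.range (m + 1),
        ((m + 1 - 1).choose k : ℝ) * p ^ k * (1 - p) ^ (m + 1 - 1 - k)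
      = ∑ k ∈ Finset.range (m + 1), p ^ k * (1 - p) ^ (m - k) * (m.choose k : ℝ) := by
        refine Finset.sum_congr rfl fun k hk => ?_
        simp only [Nat.add_sub_cancel]; ring
    _ = 1 := h.symm

lemma mean_eq (n : ℕ) (hn : 1 ≤ n) {p : ℝ} (hp : 0 < p) :
    ∑ k ∈ Finset.range n,
      ((n - 1).choose k : ℝ) * p ^ k * (1 - p) ^ (n - 1 - k) * ((n : ℝ) / (k + 1))
      = (1 - (1 - p) ^ n) / p := by
  obtain ⟨m, rfl⟩ : ∃ m, n = m + 1 := ⟨n - 1, (Nat.succ_pred_eq_of_pos hn).symm⟩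
  have key : ∀ k ∈ Finset.range (m + 1),
      ((m + 1 - 1).choose k : ℝ) * p ^ k * (1 - p) ^ (m + 1 - 1 - k) * (((m+1 : ℕ) : ℝ) / (k + 1))
      = (1 / p) * (((m + 1).choose (k + 1) : ℝ) * p ^ (k + 1) * (1 - p) ^ (m + 1 - (k + 1))) := by
    intro k hk
    have hc : (m + 1 : ℕ) * m.choose k = (m + 1).choose (k + 1) * (k + 1) :=
      Nat.add_one_mul_choose_eq m k
    have hc' : ((m : ℝ) + 1) * (m.choose k : ℝ) = ((m + 1).choose (k + 1) : ℝ) * ((k : ℝ) + 1) := by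
      exact_mod_cast hc
    have hkp : ((k : ℝ) + 1) ≠ 0 := by positivity
    have hcr : (((m + 1).choose (k + 1)) : ℝ) = ((m:ℝ)+1) * (m.choose k) / ((k:ℝ)+1) := by
      field_simp
      linarith [hc']
    simp only [Nat.add_sub_cancel, Nat.succ_sub_succ_eq_sub]
    rw [hcr]
    push_cast
    field_simp
    simp only [Nat.sub_zero]
    ring
  rw [Finset.sum_congr rfl key, ← Finset.mul_sum]
  have shift : ∑ k ∈ Finset.range (m + 1),
      (((m + 1).choose (k + 1) : ℝ) * p ^ (k + 1) * (1 - p) ^ (m + 1 - (k + 1)))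
      = ∑ j ∈ Finset.range (m + 2), (((m + 1).choose j : ℝ) * p ^ j * (1 - p) ^ (m + 1 - j))
        - (1 - p) ^ (m + 1) := by
    rw [Finset.sum_range_succ'
      (fun j => ((m + 1).choose j : ℝ) * p ^ j * (1 - p) ^ (m + 1 - j)) (m + 1)]
    simp
  rw [shift]
  have hbin : ∑ j ∈ Finset.range (m + 2), (((m + 1).choose j : ℝ) * p ^ j * (1 - p) ^ (m + 1 - j))
      = 1 := by
    have h := add_pow p (1 - p) (m + 1)
    simp only [add_sub_cancel, one_pow] at h
    calc ∑ j ∈ Finset.range (m + 2), (((m + 1).choose j : ℝ) * p ^ j * (1 - p) ^ (m + 1 - j))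
        = ∑ j ∈ Finset.range (m + 1 + 1), p ^ j * (1 - p) ^ (m + 1 - j) * ((m + 1).choose j : ℝ) := by
          refine Finset.sum_congr rfl fun j hj => by ring
      _ = 1 := h.symm
  rw [hbin]
  field_simp

lemma theta_nonneg (n : ℕ) (γ : ℝ) {p : ℝ} (hp0 : 0 ≤ p) (hp1 : p ≤ 1) :
    0 ≤ theta n γ p := by
  apply Finset.sum_nonneg
  intro k _
  have h2 : (0:ℝ) ≤ ((n : ℝ) / (k + 1)) ^ (1 - γ) := Real.rpow_nonneg (by positivity) _
  have h1 : (0:ℝ) ≤ 1 - p := by linarith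
  positivity

lemma beta_nonneg (n : ℕ) (γ : ℝ) {p : ℝ} (hp0 : 0 ≤ p) (hp1 : p ≤ 1) :
    0 ≤ beta n γ p := mul_nonneg hp0 (theta_nonneg n γ hp0 hp1)

lemma beta_lt_rpow (n : ℕ) (hn : 1 ≤ n) {γ p : ℝ} (hγ0 : 0 < γ) (hγ1 : γ < 1)
    (hp0 : 0 < p) (hp1 : p < 1) : beta n γ p < p ^ γ := by
  have hq0 : 0 < 1 - γ := by linarith
  set q : ℝ := 1 - γ with hq
  set w : ℕ → ℝ := fun k => ((n - 1).choose k : ℝ) * p ^ k * (1 - p) ^ (n - 1 - k) with hw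
  set z : ℕ → ℝ := fun k => (n : ℝ) / (k + 1) with hz
  have hwnn : ∀ k ∈ Finset.range n, 0 ≤ w k := by
    intro k _
    have h1 : (0:ℝ) ≤ 1 - p := by linarith
    simp only [hw]; positivity
  have hznn : ∀ k ∈ Finset.range n, 0 ≤ z k := by
    intro k _; simp only [hz]; positivity
  have hwsum : ∑ k ∈ Finset.range n, w k = 1 := weight_sum n hn p
  have htheta : theta n γ p = ∑ k ∈ Finset.range n, w k * z k ^ q := by
    simp only [theta, hw, hz, hq]
  have hjensen : theta n γ p ≤ (∑ k ∈ Finset.range n, w k * z k) ^ q := by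
    have hp' : (1:ℝ) ≤ 1 / q := (le_div_iff₀ hq0).mpr (by linarith)
    have h := Real.arith_mean_le_rpow_mean (Finset.range n) w (fun k => z k ^ q)
      hwnn hwsum (fun k hk => Real.rpow_nonneg (hznn k hk) q) hp'
    have heq : ∀ k ∈ Finset.range n, w k * (z k ^ q) ^ (1 / q) = w k * z k := by
      intro k hk
      rw [← Real.rpow_mul (hznn k hk), mul_one_div_cancel hq0.ne', Real.rpow_one]
    rw [Finset.sum_congr rfl heq, one_div_one_div] at h
    rw [htheta]
    exact h
  have hsum_lt : ∑ k ∈ Finset.range n, w k * z k < 1 / p := by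
    have := mean_eq n hn hp0
    have hwz : ∑ k ∈ Finset.range n, w k * z k = (1 - (1 - p) ^ n) / p := this
    rw [hwz]
    have hpow : (0:ℝ) < (1 - p) ^ n := pow_pos (by linarith) n
    rw [div_lt_div_iff₀ hp0 hp0]
    nlinarith
  have hsumnn : 0 ≤ ∑ k ∈ Finset.range n, w k * z k :=
    Finset.sum_nonneg fun k hk => mul_nonneg (hwnn k hk) (hznn k hk)
  have hlt : (∑ k ∈ Finset.range n, w k * z k) ^ q < (1 / p) ^ q :=
    Real.rpow_lt_rpow hsumnn hsum_lt hq0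
  have hfinal : p * (1 / p) ^ q = p ^ γ := by
    rw [one_div, ← Real.rpow_neg_one p, ← Real.rpow_mul hp0.le]
    nth_rewrite 1 [← Real.rpow_one p]
    rw [← Real.rpow_add hp0]
    congr 1
    rw [hq]; ring
  calc beta n γ p = p * theta n γ p := rfl
    _ ≤ p * (∑ k ∈ Finset.range n, w k * z k) ^ q :=
        mul_le_mul_of_nonneg_left hjensen hp0.le
    _ < p * (1 / p) ^ q := by exact mul_lt_mul_of_pos_left hlt hp0
    _ = p ^ γ := hfinal

theorem tontine_utility_lt_annuity_utility_gamma_lt_one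
    (n : ℕ) (hn : 2 ≤ n) (γ r : ℝ) (hγ0 : 0 < γ) (hγ1 : γ < 1) (hr : 0 < r)
    (s : ℝ → ℝ) (hmeas : Measurable s)
    (hs : ∀ t : ℝ, 0 < t → 0 < s t ∧ s t < 1)
    (hint : IntegrableOn (fun t => Real.exp (-r * t) * s t) (Ioi 0))
    (hIpos : 0 < ∫ t in Ioi (0 : ℝ), Real.exp (-r * t) * s t)
    (hintOT : IntegrableOn (fun t => Real.exp (-r * t) * (beta n γ (s t)) ^ (1 / γ)) (Ioi 0))
    (hJpos : 0 < ∫ t in Ioi (0 : ℝ), Real.exp (-r * t) * (beta n γ (s t)) ^ (1 / γ)) :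
    (1 / (1 - γ)) * (∫ t in Ioi (0 : ℝ),
        Real.exp (-r * t) * (beta n γ (s t)) ^ (1 / γ)) ^ γ
      < (1 / (1 - γ)) * (∫ t in Ioi (0 : ℝ), Real.exp (-r * t) * s t) ^ γ := by
  set f : ℝ → ℝ := fun t => Real.exp (-r * t) * (beta n γ (s t)) ^ (1 / γ) with hf
  set g : ℝ → ℝ := fun t => Real.exp (-r * t) * s t with hg
  have hpt : ∀ t ∈ Ioi (0:ℝ), f t < g t := by
    intro t ht
    obtain ⟨hs0, hs1⟩ := hs t ht
    have hb : beta n γ (s t) < (s t) ^ γ :=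
      beta_lt_rpow n (by omega) hγ0 hγ1 hs0 hs1
    have hbnn : 0 ≤ beta n γ (s t) := beta_nonneg n γ hs0.le hs1.le
    have h2 : (beta n γ (s t)) ^ (1/γ) < ((s t) ^ γ) ^ (1/γ) :=
      Real.rpow_lt_rpow hbnn hb (by positivity)
    have h3 : ((s t) ^ γ) ^ (1/γ) = s t := by
      rw [← Real.rpow_mul hs0.le, mul_one_div_cancel hγ0.ne', Real.rpow_one]
    have : (beta n γ (s t)) ^ (1/γ) < s t := lt_of_lt_of_eq h2 h3
    simp only [hf, hg]
    exact mul_lt_mul_of_pos_left this (Real.exp_pos _)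
  have hJI : (∫ t in Ioi (0:ℝ), f t) < ∫ t in Ioi (0:ℝ), g t := by
    rw [← sub_pos, ← integral_sub hint hintOT]
    rw [setIntegral_pos_iff_support_of_nonneg_ae]
    · have hsub : Ioi (0:ℝ) ⊆ Function.support (fun t => g t - f t) ∩ Ioi 0 := by
        intro t ht
        refine ⟨?_, ht⟩
        simp only [Function.mem_support]
        have := hpt t ht
        intro h
        have : g t = f t := by linarith [sub_eq_zero.mp h]
        linarith [hpt t ht]
      have := measure_mono (μ := volume) hsub
      calc (0:ENNReal) < volume (Ioi (0:ℝ)) := by simp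
        _ ≤ _ := this
    · refine (ae_restrict_iff' measurableSet_Ioi).mpr (ae_of_all _ fun t ht => ?_)
      have := hpt t ht
      simp only [Pi.zero_apply]
      linarith
    · exact hint.sub hintOT
  have hpow : (∫ t in Ioi (0:ℝ), f t) ^ γ < (∫ t in Ioi (0:ℝ), g t) ^ γ :=
    Real.rpow_lt_rpow hJpos.le hJI hγ0
  have h1γ : 0 < 1 / (1 - γ) := by
    apply div_pos one_pos; linarith
  exact mul_lt_mul_of_pos_left hpow h1γ
end
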